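/- Under the setting of the modal system pₙ' = nπqₙ, qₙ' = −nπ(1+σn²π²)pₙ − (μn²π²+κ)qₙ + (βₙ/(nπ))f(t) with |βₙ| ≤ 2√2, the functional Pₙ(t) = (1/2)n²π²qₙ² + n²π²(1+σn²π²)pₙ² + (1/2)n²π²(qₙ + ((μn²π²+κ)/(nπ))pₙ)² satisfies for a.e. t ∈ (0,T): Pₙ'(t) ≤ −((n²π²)/2)(μn²π²+κ)(qₙ² + (1+σn²π²)pₙ²) + (2/(μn²π²+κ) + (μn²π²+κ)/(2(1+σn²π²)n²π²)) βₙ² f(t)². -/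

import Mathlib

open MeasureTheory Set

/-- The modal Lyapunov functional Pₙ for the n-th Fourier mode
(pₙ, qₙ) of the closed-loop tank-liquid system. -/
noncomputable def Pmod (μ κ σ : ℝ) (n : ℕ) (p q : ℝ → ℝ) (t : ℝ) : ℝ :=
  (1/2) * (n:ℝ)^2 * Real.pi^2 * (q t)^2
    + (n:ℝ)^2 * Real.pi^2 * (1 + σ * (n:ℝ)^2 * Real.pi^2) * (p t)^2
    + (1/2) * (n:ℝ)^2 * Real.pi^2
        * (q t + ((μ * (n:ℝ)^2 * Real.pi^2 + κ) / ((n:ℝ) * Real.pi)) * p t)^2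

/-- dissipation inequality for the modal Lyapunov functional,
obtained by completing squares in its exact derivative. -/
theorem Pmod_dissipation (μ κ σ T : ℝ) (n : ℕ) (p q f : ℝ → ℝ)
    (hμ : 0 < μ) (hκ : 0 ≤ κ) (hσ : 0 < σ) (hT : 0 < T) (hn : 1 ≤ n)
    (hf : MemLp f 2 (volume.restrict (Ioo (0:ℝ) T)))
    (hp : ∀ t ∈ Icc (0:ℝ) T, HasDerivAt p ((n:ℝ) * Real.pi * q t) t)
    (hq : ∀ᵐ t ∂(volume.restrict (Ioo (0:ℝ) T)), HasDerivAt q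
      (-(n:ℝ) * Real.pi * (1 + σ * (n:ℝ)^2 * Real.pi^2) * p t
        - (μ * (n:ℝ)^2 * Real.pi^2 + κ) * q t
        + (Real.sqrt 2 * ((-1:ℝ)^n - 1) / ((n:ℝ) * Real.pi)) * f t) t) :
    ∀ᵐ t ∂(volume.restrict (Ioo (0:ℝ) T)),
      ∃ d : ℝ, HasDerivAt (Pmod μ κ σ n p q) d t ∧
        d ≤ -((n:ℝ)^2 * Real.pi^2 / 2) * (μ * (n:ℝ)^2 * Real.pi^2 + κ)
              * ((q t)^2 + (1 + σ * (n:ℝ)^2 * Real.pi^2) * (p t)^2)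
          + (2 / (μ * (n:ℝ)^2 * Real.pi^2 + κ)
              + (μ * (n:ℝ)^2 * Real.pi^2 + κ)
                / (2 * (1 + σ * (n:ℝ)^2 * Real.pi^2) * (n:ℝ)^2 * Real.pi^2))
            * (Real.sqrt 2 * ((-1:ℝ)^n - 1))^2 * (f t)^2 := by
  filter_upwards [hq, ae_restrict_mem measurableSet_Ioo] with t hqt ht
  have hpt := hp t ⟨le_of_lt ht.1, le_of_lt ht.2⟩
  set a : ℝ := (n:ℝ) * Real.pi with ha_def
  set b : ℝ := 1 + σ * (n:ℝ)^2 * Real.pi^2 with hb_def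
  set c : ℝ := μ * (n:ℝ)^2 * Real.pi^2 + κ with hc_def
  set β : ℝ := Real.sqrt 2 * ((-1:ℝ)^n - 1) with hβ_def
  have hπ : 0 < Real.pi := Real.pi_pos
  have hn1 : (1:ℝ) ≤ (n:ℝ) := by exact_mod_cast hn
  have ha : 0 < a := mul_pos (by linarith) hπ
  have hb : 0 < b := by
    have : 0 < σ * (n:ℝ)^2 * Real.pi^2 := by positivity
    simp only [hb_def]; linarith
  have hc : 0 < c := by
    have h1 : (0:ℝ) < μ * (n:ℝ)^2 * Real.pi^2 := by
      have : (0:ℝ) < (n:ℝ)^2 := by positivity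
      positivity
    simp only [hc_def]; linarith
  set q' : ℝ := -(n:ℝ) * Real.pi * b * p t - c * q t + (β / a) * f t with hq'_def
  set p' : ℝ := a * q t with hp'_def
  set k : ℝ := c / a with hk_def
  -- derivative building blocks
  have h1 : HasDerivAt (fun s => (q s)^2) (2 * q t * q') t := by
    simpa using hqt.fun_pow 2
  have h2 : HasDerivAt (fun s => (p s)^2) (2 * p t * p') t := by
    simpa using hpt.fun_pow 2
  have h3 : HasDerivAt (fun s => (q s + k * p s)^2)
      (2 * (q t + k * p t) * (q' + k * p')) t := by
    have := (hqt.add (hpt.const_mul k)).fun_pow 2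
    simpa [mul_comm] using this
  set D : ℝ := (1/2) * (n:ℝ)^2 * Real.pi^2 * (2 * q t * q')
      + (n:ℝ)^2 * Real.pi^2 * b * (2 * p t * p')
      + (1/2) * (n:ℝ)^2 * Real.pi^2 * (2 * (q t + k * p t) * (q' + k * p')) with hD_def
  refine ⟨D, ?_, ?_⟩
  · unfold Pmod
    exact (((h1.const_mul _).add (h2.const_mul _)).add (h3.const_mul _))
  · have ha' : a ≠ 0 := ne_of_gt ha
    have hD_eq : D = -c * a^2 * ((q t)^2 + b * (p t)^2)
        + 2 * a * β * (q t) * (f t) + β * c * (p t) * (f t) := by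
      simp only [hD_def, hq'_def, hp'_def, hk_def, ha_def]
      field_simp
      ring
    have e1 : 2 * a * β * (q t) * (f t)
        ≤ a^2 * c / 2 * (q t)^2 + 2 / c * β^2 * (f t)^2 := by
      rw [← sub_nonneg]
      have hkey : a^2 * c / 2 * (q t)^2 + 2 / c * β^2 * (f t)^2
          - 2 * a * β * (q t) * (f t)
          = (a * c * q t - 2 * β * f t)^2 / (2 * c) := by
        field_simp
        ring
      rw [hkey]; positivity
    have e2 : β * c * (p t) * (f t)
        ≤ a^2 * b * c / 2 * (p t)^2 + c / (2 * b * a^2) * β^2 * (f t)^2 := by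
      rw [← sub_nonneg]
      have hkey : a^2 * b * c / 2 * (p t)^2 + c / (2 * b * a^2) * β^2 * (f t)^2
          - β * c * (p t) * (f t)
          = (a^2 * b * p t - β * f t)^2 * c / (2 * a^2 * b) := by
        field_simp
        ring
      rw [hkey]; positivity
    have hR : -((n:ℝ)^2 * Real.pi^2 / 2) * c * ((q t)^2 + b * (p t)^2)
          + (2 / c + c / (2 * b * (n:ℝ)^2 * Real.pi^2)) * β^2 * (f t)^2
        = -c * a^2 * ((q t)^2 + b * (p t)^2)
          + (a^2 * c / 2 * (q t)^2 + a^2 * b * c / 2 * (p t)^2)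
          + (2 / c * β^2 * (f t)^2 + c / (2 * b * a^2) * β^2 * (f t)^2) := by
      simp only [ha_def]
      field_simp
      ring
    rw [hD_eq, hR]
    linarith [e1, e2]
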